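/- Let n ≥ 1, b > 0 and A > 0 with bA ≥ n, and let r_1, ..., r_n be nonnegative integers. The integral over the polydisc {|y_1| < 1, ..., |y_n| < 1} ⊂ ℂⁿ of ∏_{k=1}^n |y_k|^{2 r_k} · |y|^{-2bA} (with |y| the Euclidean norm and integration with respect to Lebesgue measure on ℂⁿ ≅ ℝ^{2n}) is finite if and only if ∑_{j=1}^n r_j ≥ ⌊bA⌋ - n + 1. -/

import Mathlib

open MeasureTheory Metric


noncomputable def pdF (n : ℕ) (b A : ℝ) (r : Fin n → ℕ) : (Fin n → ℂ) → ℝ :=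
  fun y => (∏ k, ‖y k‖ ^ (2 * r k)) *
      Real.sqrt (∑ k, ‖y k‖ ^ 2) ^ (-(2 * b * A))

lemma pdF_meas (n : ℕ) (b A : ℝ) (hbA : b * A ≠ 0) (r : Fin n → ℕ) :
    Measurable (pdF n b A r) := by
  unfold pdF
  have habs : Measurable (fun z : ℂ => ‖z‖) := continuous_norm.measurable
  have hsq : Measurable (fun y : Fin n → ℂ => Real.sqrt (∑ k, ‖y k‖ ^ 2)) :=
    (Finset.measurable_sum _ fun k _ =>
      ((habs.comp (measurable_pi_apply k)).pow_const 2)).sqrt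
  apply Measurable.mul
  · exact Finset.measurable_prod _ fun k _ =>
      ((habs.comp (measurable_pi_apply k)).pow_const _)
  · have hc : -(2 * b * A) ≠ 0 := by
      intro h; apply hbA; nlinarith [h]
    have heq : (fun y : Fin n → ℂ =>
        Real.sqrt (∑ k, ‖y k‖ ^ 2) ^ (-(2 * b * A)))
        = fun y => if Real.sqrt (∑ k, ‖y k‖ ^ 2) = 0 then 0
            else Real.exp (Real.log (Real.sqrt (∑ k, ‖y k‖ ^ 2)) * (-(2 * b * A))) := by
      funext y
      by_cases h : Real.sqrt (∑ k, ‖y k‖ ^ 2) = 0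
      · simp [h, Real.zero_rpow hc]
      · simp [h, Real.rpow_def_of_pos (lt_of_le_of_ne (Real.sqrt_nonneg _) (Ne.symm h))]
    rw [heq]
    exact Measurable.ite (hsq (measurableSet_singleton 0)) measurable_const
      ((Real.measurable_log.comp hsq).mul_const _).exp

lemma pdF_nonneg (n : ℕ) (b A : ℝ) (r : Fin n → ℕ) (y : Fin n → ℂ) : 0 ≤ pdF n b A r y := by
  unfold pdF; positivity

lemma pdP_meas (n : ℕ) : MeasurableSet {y : Fin n → ℂ | ∀ k, ‖y k‖ < 1} := by
  have : {y : Fin n → ℂ | ∀ k, ‖y k‖ < 1}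
      = ⋂ k, (fun y : Fin n → ℂ => y k) ⁻¹' {z : ℂ | ‖z‖ < 1} := by
    ext y; simp
  rw [this]
  exact MeasurableSet.iInter fun k =>
    (measurable_pi_apply k) (isOpen_lt continuous_norm continuous_const).measurableSet

lemma pdF_int_iff (n : ℕ) (b A : ℝ) (hbA : b * A ≠ 0) (r : Fin n → ℕ) :
    IntegrableOn (pdF n b A r) {y : Fin n → ℂ | ∀ k, ‖y k‖ < 1} volume ↔
      ∫⁻ y in {y : Fin n → ℂ | ∀ k, ‖y k‖ < 1},
        ENNReal.ofReal (pdF n b A r y) < ⊤ := by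
  constructor
  · intro h
    exact (hasFiniteIntegral_iff_ofReal (ae_of_all _ fun y => pdF_nonneg n b A r y)).1 h.2
  · intro h
    exact ⟨(pdF_meas n b A hbA r).aestronglyMeasurable.restrict,
      (hasFiniteIntegral_iff_ofReal (ae_of_all _ fun y => pdF_nonneg n b A r y)).2 h⟩

lemma pd_finrank (n : ℕ) : Module.finrank ℝ (Fin n → ℂ) = 2 * n := by
  simp [Module.finrank_pi_fintype, Complex.finrank_real_complex, Finset.sum_const, mul_comm]

lemma pd_norm_le_sqrt (n : ℕ) (y : Fin n → ℂ) :
    ‖y‖ ≤ Real.sqrt (∑ k, ‖y k‖ ^ 2) := by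
  rw [pi_norm_le_iff_of_nonneg (Real.sqrt_nonneg _)]
  intro i
  rw [show ‖y i‖ = Real.sqrt (‖y i‖ ^ 2) from
    (Real.sqrt_sq (norm_nonneg _)).symm]
  exact Real.sqrt_le_sqrt (Finset.single_le_sum (f := fun k => ‖y k‖ ^ 2)
    (fun k _ => sq_nonneg _) (Finset.mem_univ i))

lemma pdF_lintegral_lt_top (n : ℕ) (hn : 1 ≤ n) (b A : ℝ) (hbA0 : 0 ≤ b * A)
    (r : Fin n → ℕ) (hlt : b * A < (∑ k, (r k : ℝ)) + n) :
    ∫⁻ y in {y : Fin n → ℂ | ∀ k, ‖y k‖ < 1},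
      ENNReal.ofReal (pdF n b A r y) < ⊤ := by
  set m : ℕ := ∑ k, r k with hm
  have hmr : (∑ k, (r k : ℝ)) = (m : ℝ) := by rw [hm]; push_cast; rfl
  set e : ℝ := 2 * b * A - 2 * m - 2 * n with he_def
  have he : e < 0 := by rw [hmr] at hlt; simp only [he_def]; linarith
  set Aset : ℕ → Set (Fin n → ℂ) :=
    fun j => {y | (2:ℝ) ^ (-(j:ℝ) - 1) < ‖y‖ ∧ ‖y‖ ≤ (2:ℝ) ^ (-(j:ℝ))} with hAset
  set K := volume (ball (0 : Fin n → ℂ) 1) with hK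
  have hKtop : K ≠ ⊤ := measure_ball_lt_top.ne
  -- covering
  have hcover : {y : Fin n → ℂ | ∀ k, ‖y k‖ < 1} ⊆ {0} ∪ ⋃ j, Aset j := by
    intro y hy
    by_cases h0 : y = 0
    · exact Or.inl h0
    · right
      have ht0 : 0 < ‖y‖ := norm_pos_iff.2 h0
      have ht1 : ‖y‖ < 1 := (pi_norm_lt_iff zero_lt_one).2 fun i => hy i
      have hlog : Real.logb 2 ‖y‖ < 0 := Real.logb_neg one_lt_two ht0 ht1
      set u : ℝ := -Real.logb 2 ‖y‖ with hu
      have hu0 : 0 ≤ u := by simp [hu]; linarith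
      set j : ℕ := ⌊u⌋₊ with hj
      have h1 : (j : ℝ) ≤ u := Nat.floor_le hu0
      have h2 : u < j + 1 := Nat.lt_floor_add_one u
      have hyeq : ‖y‖ = (2:ℝ) ^ Real.logb 2 ‖y‖ :=
        (Real.rpow_logb two_pos (by norm_num) ht0).symm
      refine Set.mem_iUnion.2 ⟨j, ?_, ?_⟩
      · rw [hyeq]
        exact Real.rpow_lt_rpow_of_exponent_lt one_lt_two (by simp only [hu] at h2; linarith)
      · rw [hyeq]
        exact Real.rpow_le_rpow_of_exponent_le one_le_two (by simp only [hu] at h1; linarith)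
  -- per annulus bound
  have hterm : ∀ j : ℕ, ∫⁻ y in Aset j, ENNReal.ofReal (pdF n b A r y) ≤
      (ENNReal.ofReal ((2:ℝ) ^ (2 * b * A)) * K) * (ENNReal.ofReal ((2:ℝ) ^ e)) ^ j := by
    intro j
    set β : ℝ := (2:ℝ) ^ (-(j:ℝ)) with hβ
    have hβ0 : 0 < β := Real.rpow_pos_of_pos two_pos _
    set Cj : ℝ := (2:ℝ) ^ ((-(j:ℝ)) * (2 * m)) * (2:ℝ) ^ (((j:ℝ) + 1) * (2 * b * A)) with hCj
    have hCj0 : 0 ≤ Cj := by positivity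
    have hpoint : ∀ y ∈ Aset j, ENNReal.ofReal (pdF n b A r y) ≤ ENNReal.ofReal Cj := by
      intro y hy
      obtain ⟨hy1, hy2⟩ := hy
      apply ENNReal.ofReal_le_ofReal
      unfold pdF
      have hknorm : ∀ k, ‖y k‖ ≤ β := fun k => by
        exact (norm_le_pi_norm y k).trans hy2
      have h1 : (∏ k, ‖y k‖ ^ (2 * r k)) ≤ (2:ℝ) ^ ((-(j:ℝ)) * (2 * m)) := by
        calc (∏ k, ‖y k‖ ^ (2 * r k)) ≤ ∏ k, β ^ (2 * r k) :=
              Finset.prod_le_prod (fun k _ => pow_nonneg (norm_nonneg _) _)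
                (fun k _ => pow_le_pow_left₀ (norm_nonneg _) (hknorm k) _)
          _ = β ^ (∑ k, 2 * r k) := Finset.prod_pow_eq_pow_sum _ _ _
          _ = β ^ ((2 * m : ℕ) : ℝ) := by rw [← Finset.mul_sum, ← hm, Real.rpow_natCast]
          _ = (2:ℝ) ^ ((-(j:ℝ)) * (2 * m)) := by
              rw [hβ, ← Real.rpow_mul two_pos.le]; push_cast; ring_nf
      have hsqrt : (2:ℝ) ^ (-(j:ℝ) - 1) < Real.sqrt (∑ k, ‖y k‖ ^ 2) :=
        lt_of_lt_of_le hy1 (pd_norm_le_sqrt n y)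
      have h2 : Real.sqrt (∑ k, ‖y k‖ ^ 2) ^ (-(2 * b * A)) ≤
          (2:ℝ) ^ (((j:ℝ) + 1) * (2 * b * A)) := by
        have := Real.rpow_le_rpow_of_nonpos (Real.rpow_pos_of_pos two_pos (-(j:ℝ) - 1))
          hsqrt.le (neg_nonpos.2 (by linarith : (0:ℝ) ≤ 2 * b * A))
        calc Real.sqrt (∑ k, ‖y k‖ ^ 2) ^ (-(2 * b * A)) ≤
              ((2:ℝ) ^ (-(j:ℝ) - 1)) ^ (-(2 * b * A)) := this
          _ = (2:ℝ) ^ (((j:ℝ) + 1) * (2 * b * A)) := by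
              rw [← Real.rpow_mul two_pos.le]; ring_nf
      exact mul_le_mul h1 h2 (Real.rpow_nonneg (Real.sqrt_nonneg _) _)
        (Real.rpow_nonneg two_pos.le _)
    calc ∫⁻ y in Aset j, ENNReal.ofReal (pdF n b A r y)
        ≤ ∫⁻ _ in Aset j, ENNReal.ofReal Cj := setLIntegral_mono measurable_const hpoint
      _ = ENNReal.ofReal Cj * volume (Aset j) := setLIntegral_const _ _
      _ ≤ ENNReal.ofReal Cj * (ENNReal.ofReal (β ^ (2 * n)) * K) := by
          gcongr
          calc volume (Aset j) ≤ volume (closedBall (0 : Fin n → ℂ) β) :=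
                measure_mono (fun y hy => mem_closedBall_zero_iff.2 hy.2)
            _ = ENNReal.ofReal (β ^ (2 * n)) * K := by
                rw [Measure.addHaar_closedBall _ _ hβ0.le, pd_finrank, hK]
      _ = (ENNReal.ofReal ((2:ℝ) ^ (2 * b * A)) * K) * (ENNReal.ofReal ((2:ℝ) ^ e)) ^ j := by
          have hreal : Cj * β ^ (2 * n) = (2:ℝ) ^ (2 * b * A) * ((2:ℝ) ^ e) ^ j := by
            rw [hCj, hβ, ← Real.rpow_natCast ((2:ℝ) ^ (-(j:ℝ))) (2 * n),
              ← Real.rpow_mul two_pos.le, ← Real.rpow_natCast ((2:ℝ) ^ e) j,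
              ← Real.rpow_mul two_pos.le, ← Real.rpow_add two_pos, ← Real.rpow_add two_pos,
              ← Real.rpow_add two_pos]
            congr 1
            simp only [he_def]
            push_cast
            ring
          rw [← ENNReal.ofReal_pow (Real.rpow_nonneg two_pos.le _), ← mul_assoc,
            ← ENNReal.ofReal_mul hCj0, hreal,
            ENNReal.ofReal_mul (Real.rpow_nonneg two_pos.le _)]
          ring
  -- assemble
  have h0 : volume ({(0 : Fin n → ℂ)} : Set (Fin n → ℂ)) = 0 := by
    rw [← Metric.closedBall_zero (x := (0 : Fin n → ℂ)),
      Measure.addHaar_closedBall _ _ le_rfl, pd_finrank]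
    rw [zero_pow (by omega : 2 * n ≠ 0)]
    simp
  have hq : ENNReal.ofReal ((2:ℝ) ^ e) < 1 := by
    rw [ENNReal.ofReal_lt_one]
    exact Real.rpow_lt_one_of_one_lt_of_neg one_lt_two he
  calc ∫⁻ y in {y : Fin n → ℂ | ∀ k, ‖y k‖ < 1},
        ENNReal.ofReal (pdF n b A r y)
      ≤ ∫⁻ y in ({0} ∪ ⋃ j, Aset j), ENNReal.ofReal (pdF n b A r y) :=
        lintegral_mono_set hcover
    _ ≤ (∫⁻ y in {(0 : Fin n → ℂ)}, ENNReal.ofReal (pdF n b A r y)) +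
        ∫⁻ y in ⋃ j, Aset j, ENNReal.ofReal (pdF n b A r y) := lintegral_union_le _ _ _
    _ = ∫⁻ y in ⋃ j, Aset j, ENNReal.ofReal (pdF n b A r y) := by
        rw [setLIntegral_measure_zero _ _ h0, zero_add]
    _ ≤ ∑' j, ∫⁻ y in Aset j, ENNReal.ofReal (pdF n b A r y) := lintegral_iUnion_le _ _
    _ ≤ ∑' j : ℕ, (ENNReal.ofReal ((2:ℝ) ^ (2 * b * A)) * K) *
          (ENNReal.ofReal ((2:ℝ) ^ e)) ^ j := ENNReal.tsum_le_tsum hterm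
    _ = (ENNReal.ofReal ((2:ℝ) ^ (2 * b * A)) * K) *
          ∑' j : ℕ, (ENNReal.ofReal ((2:ℝ) ^ e)) ^ j := ENNReal.tsum_mul_left
    _ < ⊤ := by
        apply ENNReal.mul_lt_top
        · exact ENNReal.mul_lt_top ENNReal.ofReal_lt_top hKtop.lt_top
        · rw [ENNReal.tsum_geometric]
          exact ENNReal.inv_lt_top.2 (tsub_pos_of_lt hq)

lemma pdF_lintegral_eq_top (n : ℕ) (hn : 1 ≤ n) (b A : ℝ) (hbA0 : 0 < b * A)
    (r : Fin n → ℕ) (hge : (∑ k, (r k : ℝ)) + n ≤ b * A) :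
    ∫⁻ y in {y : Fin n → ℂ | ∀ k, ‖y k‖ < 1},
      ENNReal.ofReal (pdF n b A r y) = ⊤ := by
  set m : ℕ := ∑ k, r k with hm
  have hmr : (∑ k, (r k : ℝ)) = (m : ℝ) := by rw [hm]; push_cast; rfl
  rw [hmr] at hge
  have k0 : Fin n := ⟨0, hn⟩
  have habs : Measurable (fun z : ℂ => ‖z‖) := continuous_norm.measurable
  set β : ℕ → ℝ := fun j => (2:ℝ) ^ (-(j:ℝ)) with hβdef
  have hβ0 : ∀ j, 0 < β j := fun j => Real.rpow_pos_of_pos two_pos _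
  have hβ1 : ∀ j, β j ≤ 1 := fun j =>
    Real.rpow_le_one_of_one_le_of_nonpos one_le_two (neg_nonpos.2 (Nat.cast_nonneg j))
  have hβsucc : ∀ j : ℕ, β (j+1) = β j / 2 := fun j => by
    simp only [hβdef]
    rw [show -(((j:ℕ)+1 : ℕ):ℝ) = -(j:ℝ) - 1 by push_cast; ring,
      Real.rpow_sub two_pos, Real.rpow_one]
  set ann : ℕ → Set ℂ := fun j => {w | β j / 2 ≤ ‖w‖ ∧ ‖w‖ < β j}
    with hanndef
  set Bset : ℕ → Set (Fin n → ℂ) := fun j => Set.pi Set.univ (fun _ => ann j) with hBdef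
  have hannm : ∀ j, MeasurableSet (ann j) := fun j => habs measurableSet_Ico
  have hBm : ∀ j, MeasurableSet (Bset j) := fun j => MeasurableSet.univ_pi fun _ => hannm j
  have hBsub : ∀ j, Bset j ⊆ {y : Fin n → ℂ | ∀ k, ‖y k‖ < 1} := by
    intro j y hy k
    exact lt_of_lt_of_le ((Set.mem_univ_pi.1 hy k).2) (hβ1 j)
  have hdisj : Pairwise (Function.onFun Disjoint Bset) := by
    have key : ∀ i j : ℕ, i < j → Disjoint (Bset i) (Bset j) := by
      intro i j hij
      rw [Set.disjoint_left]
      intro y hyi hyj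
      have h1 : β i / 2 ≤ ‖y k0‖ := (Set.mem_univ_pi.1 hyi k0).1
      have h2 : ‖y k0‖ < β j := (Set.mem_univ_pi.1 hyj k0).2
      have h3 : β j ≤ β i / 2 := by
        rw [← hβsucc i]
        simp only [hβdef]
        apply Real.rpow_le_rpow_of_exponent_le one_le_two
        have : (i:ℝ) + 1 ≤ (j:ℝ) := by exact_mod_cast hij
        push_cast
        linarith
      linarith
    intro i j hne
    rcases hne.lt_or_gt with h | h
    · exact key i j h
    · exact (key j i h).symm
  set v : ENNReal := volume (ball (0:ℂ) 1) with hv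
  have hv0 : v ≠ 0 := (measure_ball_pos _ _ one_pos).ne'
  have hvt : v ≠ ⊤ := measure_ball_lt_top.ne
  -- annulus volume lower bound
  have hannv : ∀ j, ENNReal.ofReal ((3/4) * β j ^ 2) * v ≤ volume (ann j) := by
    intro j
    have hset : ann j = ball (0:ℂ) (β j) \ ball (0:ℂ) (β j / 2) := by
      ext w
      simp only [hanndef, Set.mem_setOf_eq, Set.mem_diff, mem_ball_zero_iff,
        not_lt]
      tauto
    have hballβ : volume (ball (0:ℂ) (β j)) = ENNReal.ofReal (β j ^ 2) * v := by
      rw [Measure.addHaar_ball _ _ (hβ0 j).le, Complex.finrank_real_complex, hv]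
    have hballα : volume (ball (0:ℂ) (β j / 2)) = ENNReal.ofReal ((β j / 2) ^ 2) * v := by
      rw [Measure.addHaar_ball _ _ (by positivity), Complex.finrank_real_complex, hv]
    rw [hset]
    refine le_trans ?_ le_measure_diff
    rw [hballβ, hballα]
    refine ENNReal.le_sub_of_add_le_right (by finiteness) ?_
    rw [← add_mul, ← ENNReal.ofReal_add (by positivity) (by positivity)]
    apply mul_le_mul_left
    apply ENNReal.ofReal_le_ofReal
    ring_nf
    nlinarith [sq_nonneg (β j)]
  -- constant lower bound for the integrand on Bset j
  set C : ℝ := (1/2 : ℝ) ^ (2*m) * (3/4 : ℝ) ^ n * Real.sqrt n ^ (-(2*b*A)) with hC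
  have hsqn : (0:ℝ) < Real.sqrt n := Real.sqrt_pos.2 (by exact_mod_cast hn)
  have hC0 : 0 < C := by positivity
  set L : ENNReal := ENNReal.ofReal C * v ^ n with hL
  have hterm : ∀ j, L ≤ ∫⁻ y in Bset j, ENNReal.ofReal (pdF n b A r y) := by
    intro j
    set cj : ℝ := (β j / 2) ^ (2*m) * (Real.sqrt n * β j) ^ (-(2*b*A)) with hcj
    have hcj0 : 0 ≤ cj := by positivity
    -- pointwise lower bound
    have hpoint : ∀ y ∈ Bset j, ENNReal.ofReal cj ≤ ENNReal.ofReal (pdF n b A r y) := by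
      intro y hy
      have hmem : ∀ k, β j / 2 ≤ ‖y k‖ ∧ ‖y k‖ < β j :=
        fun k => Set.mem_univ_pi.1 hy k
      apply ENNReal.ofReal_le_ofReal
      unfold pdF
      have hsum2 : ∑ k, 2 * r k = 2 * m := by rw [hm, Finset.mul_sum]
      have h1 : (β j / 2) ^ (2*m) ≤ ∏ k, ‖y k‖ ^ (2 * r k) := by
        calc (β j / 2) ^ (2*m) = β (j+1) ^ (2*m) := by rw [hβsucc]
          _ = β (j+1) ^ (∑ k, 2 * r k) := by rw [hsum2]
          _ = ∏ k, β (j+1) ^ (2 * r k) := (Finset.prod_pow_eq_pow_sum _ _ _).symm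
          _ ≤ ∏ k, ‖y k‖ ^ (2 * r k) :=
              Finset.prod_le_prod (fun k _ => pow_nonneg (hβ0 _).le _)
                (fun k _ => pow_le_pow_left₀ (hβ0 _).le
                  (by rw [hβsucc]; exact (hmem k).1) _)
      have hsum_pos : 0 < ∑ k, ‖y k‖ ^ 2 := by
        have h := (hmem k0).1
        have : (β j / 2) ^ 2 ≤ ‖y k0‖ ^ 2 :=
          pow_le_pow_left₀ (by positivity) h 2
        have hs : ‖y k0‖ ^ 2 ≤ ∑ k, ‖y k‖ ^ 2 := by
          simpa using Finset.single_le_sum (f := fun k => ‖y k‖ ^ 2)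
            (fun k _ => sq_nonneg _) (Finset.mem_univ k0)
        have hb2 : 0 < (β j / 2) ^ 2 := by positivity
        linarith
      have hsqrt_le : Real.sqrt (∑ k, ‖y k‖ ^ 2) ≤ Real.sqrt n * β j := by
        have hsum_le : ∑ k, ‖y k‖ ^ 2 ≤ (n : ℝ) * β j ^ 2 := by
          calc ∑ k, ‖y k‖ ^ 2 ≤ ∑ _k : Fin n, β j ^ 2 :=
                Finset.sum_le_sum (fun k _ =>
                  pow_le_pow_left₀ (norm_nonneg _) (hmem k).2.le 2)
            _ = (n : ℝ) * β j ^ 2 := by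
                rw [Finset.sum_const, Finset.card_univ, Fintype.card_fin, nsmul_eq_mul]
        calc Real.sqrt (∑ k, ‖y k‖ ^ 2) ≤ Real.sqrt ((n : ℝ) * β j ^ 2) :=
              Real.sqrt_le_sqrt hsum_le
          _ = Real.sqrt n * β j := by
              rw [Real.sqrt_mul (Nat.cast_nonneg n), Real.sqrt_sq (hβ0 j).le]
      have h2 : (Real.sqrt n * β j) ^ (-(2*b*A)) ≤
          Real.sqrt (∑ k, ‖y k‖ ^ 2) ^ (-(2*b*A)) :=
        Real.rpow_le_rpow_of_nonpos (Real.sqrt_pos.2 hsum_pos) hsqrt_le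
          (neg_nonpos.2 (by linarith))
      rw [hcj]
      exact mul_le_mul h1 h2 (Real.rpow_nonneg (by positivity) _)
        (Finset.prod_nonneg fun k _ => pow_nonneg (norm_nonneg _) _)
    -- volume of the box
    have hBvol : (ENNReal.ofReal ((3/4) * β j ^ 2) * v) ^ n ≤ volume (Bset j) := by
      rw [hBdef]
      calc (ENNReal.ofReal ((3/4) * β j ^ 2) * v) ^ n ≤ (volume (ann j)) ^ n := by
            gcongr
            exact hannv j
        _ = volume (Set.pi Set.univ (fun _ : Fin n => ann j)) := by
            rw [volume_pi_pi, Finset.prod_const, Finset.card_univ, Fintype.card_fin]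
    -- the key constant comparison
    have hfactor : cj * ((3/4) * β j ^ 2) ^ n =
        C * β j ^ ((2*(m:ℝ) + 2*(n:ℝ)) - 2*b*A) := by
      have e1 : cj * ((3/4) * β j ^ 2) ^ n =
          C * (β j ^ (2*m + 2*n) * β j ^ (-(2*b*A))) := by
        rw [hcj, hC, Real.mul_rpow (Real.sqrt_nonneg _) (hβ0 j).le, mul_pow,
          ← pow_mul, div_pow, pow_add, div_pow]
        field_simp
        have h2 : ((1:ℝ)/2) ^ (m*2) * 2 ^ (m*2) = 1 := by rw [← mul_pow]; norm_num
        linear_combination (-(β j ^ (m * 2) * β j ^ (n * 2) * β j ^ (-(2 * b * A)))) * h2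
      rw [e1, ← Real.rpow_natCast (β j) (2*m + 2*n), ← Real.rpow_add (hβ0 j)]
      congr 1
      push_cast
      ring
    have hCle : C ≤ cj * ((3/4) * β j ^ 2) ^ n := by
      rw [hfactor]
      have hexp : (2*(m:ℝ) + 2*(n:ℝ)) - 2*b*A ≤ 0 := by linarith
      have := Real.one_le_rpow_of_pos_of_le_one_of_nonpos (hβ0 j) (hβ1 j) hexp
      nlinarith
    calc L = ENNReal.ofReal C * v ^ n := hL
      _ ≤ ENNReal.ofReal (cj * ((3/4) * β j ^ 2) ^ n) * v ^ n :=
          mul_le_mul_left (ENNReal.ofReal_le_ofReal hCle) _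
      _ = ENNReal.ofReal cj * (ENNReal.ofReal ((3/4) * β j ^ 2) * v) ^ n := by
          rw [ENNReal.ofReal_mul hcj0, ENNReal.ofReal_pow (by positivity), mul_pow]
          ring
      _ ≤ ENNReal.ofReal cj * volume (Bset j) := by gcongr
      _ = ∫⁻ _ in Bset j, ENNReal.ofReal cj := (setLIntegral_const _ _).symm
      _ ≤ ∫⁻ y in Bset j, ENNReal.ofReal (pdF n b A r y) :=
          setLIntegral_mono ((pdF_meas n b A hbA0.ne' r).ennreal_ofReal) hpoint
  -- conclude
  have htop : (⊤ : ENNReal) ≤ ∫⁻ y in {y : Fin n → ℂ | ∀ k, ‖y k‖ < 1},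
      ENNReal.ofReal (pdF n b A r y) := by
    have hL0 : L ≠ 0 := by
      rw [hL]
      exact mul_ne_zero (by simp [ENNReal.ofReal_eq_zero, not_le, hC0]) (pow_ne_zero n hv0)
    calc (⊤ : ENNReal) = ∑' _ : ℕ, L := (ENNReal.tsum_const_eq_top_of_ne_zero hL0).symm
      _ ≤ ∑' j : ℕ, ∫⁻ y in Bset j, ENNReal.ofReal (pdF n b A r y) :=
          ENNReal.tsum_le_tsum hterm
      _ = ∫⁻ y in ⋃ j, Bset j, ENNReal.ofReal (pdF n b A r y) :=
          (lintegral_iUnion hBm hdisj _).symm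
      _ ≤ ∫⁻ y in {y : Fin n → ℂ | ∀ k, ‖y k‖ < 1},
          ENNReal.ofReal (pdF n b A r y) :=
          lintegral_mono_set (Set.iUnion_subset hBsub)
  exact top_le_iff.1 htop


open MeasureTheory

/-- The integral over the unit polydisc in ℂⁿ of ∏ |y_k|^{2 r_k} · |y|^{-2bA} (with |y| the
Euclidean norm) is finite iff ∑ r_j ≥ ⌊bA⌋ - n + 1. -/
theorem polydisc_integral_finite_iff
    (n : ℕ) (hn : 1 ≤ n) (b A : ℝ) (hb : 0 < b) (hA : 0 < A) (hbA : (n : ℝ) ≤ b * A)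
    (r : Fin n → ℕ) :
    IntegrableOn
      (fun y : Fin n → ℂ =>
        (∏ k, ‖y k‖ ^ (2 * r k)) *
          Real.sqrt (∑ k, ‖y k‖ ^ 2) ^ (-(2 * b * A)))
      {y : Fin n → ℂ | ∀ k, ‖y k‖ < 1} volume ↔
    (⌊b * A⌋ - n + 1 : ℤ) ≤ ∑ j, (r j : ℤ) := by
  have hbA0 : 0 < b * A := lt_of_lt_of_le (by exact_mod_cast hn : (0:ℝ) < n) hbA
  show IntegrableOn (pdF n b A r) {y : Fin n → ℂ | ∀ k, ‖y k‖ < 1} volume ↔ _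
  rw [pdF_int_iff n b A hbA0.ne' r]
  have hsum : (∑ j, (r j : ℤ)) = ((∑ k, r k : ℕ) : ℤ) := by push_cast; rfl
  rw [hsum]
  have hsumR : (∑ k, (r k : ℝ)) = ((∑ k, r k : ℕ) : ℝ) := by push_cast; rfl
  constructor
  · intro h
    by_contra hcon
    push_neg at hcon
    have h2 : ((∑ k, r k : ℕ) : ℤ) + n ≤ ⌊b * A⌋ := by omega
    have h3 : ((∑ k, r k : ℕ) : ℝ) + n ≤ b * A := by
      have := Int.le_floor.1 h2
      push_cast at this
      linarith
    rw [pdF_lintegral_eq_top n hn b A hbA0 r (by rw [hsumR]; linarith)] at h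
    exact absurd h (lt_irrefl ⊤)
  · intro h
    have h2 : ⌊b * A⌋ < ((∑ k, r k : ℕ) : ℤ) + n := by omega
    have h3 : b * A < ((∑ k, r k : ℕ) : ℝ) + n := by
      have := Int.floor_lt.1 h2
      push_cast at this
      linarith
    exact pdF_lintegral_lt_top n hn b A hbA0.le r (by rw [hsumR]; linarith)
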